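/- arXiv:1501.04806 — 4 statements merged into one kernel-verified Lean document; each statement's English description precedes it below -/
import Mathlib

section
/- Let ν ∈ (0,1), γ > -ν, λ ∈ ℝ, and define f(t) = 1 + Σ_{k=1}^∞ (λ t^{ν+γ})^k ∏_{j=0}^{k-1} Γ(νj + γj + γ + 1)/Γ(νj + γj + γ + ν + 1) for t ≥ 0 (the Kilbas–Saigo function E_{ν, 1+γ/ν, γ/ν}(λ t^{ν+γ})). Then the series converges for all t ≥ 0, f(0) = 1, and f satisfies the fractional differential equation ᶜD₀₊^ν f(t) = λ t^γ f(t) for t > 0, where ᶜD₀₊^ν is the Caputo derivative of order ν. -/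
open Real Finset

noncomputable def KS (ν γ : ℝ) (k : ℕ) : ℝ :=
  ∏ j ∈ Finset.range k,
    Real.Gamma (ν * j + γ * j + γ + 1) / Real.Gamma (ν * j + γ * j + γ + ν + 1)

lemma KS_arg_pos {ν γ : ℝ} (hν1 : ν < 1) (hγ : -ν < γ) (j : ℕ) :
    0 < ν * j + γ * j + γ + 1 := by
  have h1 : 0 < γ + 1 := by linarith
  have h2 : 0 ≤ (ν + γ) * j := mul_nonneg (by linarith) (Nat.cast_nonneg j)
  nlinarith

lemma KS_pos {ν γ : ℝ} (hν0 : 0 < ν) (hν1 : ν < 1) (hγ : -ν < γ) (k : ℕ) :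
    0 < KS ν γ k := by
  refine Finset.prod_pos fun j _ => div_pos ?_ ?_
  · exact Real.Gamma_pos_of_pos (KS_arg_pos hν1 hγ j)
  · exact Real.Gamma_pos_of_pos (by linarith [KS_arg_pos hν1 hγ j])

lemma KS_succ (ν γ : ℝ) (k : ℕ) :
    KS ν γ (k + 1) = KS ν γ k *
      (Real.Gamma (ν * k + γ * k + γ + 1) / Real.Gamma (ν * k + γ * k + γ + ν + 1)) :=
  Finset.prod_range_succ _ _

/-- Log-convexity bound. -/
lemma Gamma_ratio_le {x ν : ℝ} (hx : 2 ≤ x) (hν0 : 0 < ν) (hν1 : ν ≤ 1) :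
    Real.Gamma x / Real.Gamma (x + ν) ≤ (x - 1) ^ (-ν) := by
  have h1 : (0:ℝ) < x - 1 := by linarith
  have hx0 : (0:ℝ) < x := by linarith
  have hxv : (0:ℝ) < x + ν := by linarith
  have hΓx := Real.Gamma_pos_of_pos hx0
  have hΓ1 := Real.Gamma_pos_of_pos h1
  have hΓv := Real.Gamma_pos_of_pos hxv
  have hs := Real.convexOn_log_Gamma.slope_mono_adjacent
    (Set.mem_Ioi.mpr h1) (Set.mem_Ioi.mpr hxv) (by linarith : x - 1 < x) (by linarith : x < x + ν)
  have hgam : Real.Gamma x = (x - 1) * Real.Gamma (x - 1) := by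
    have := Real.Gamma_add_one (ne_of_gt h1)
    rwa [sub_add_cancel] at this
  have e1 : (Real.log ∘ Real.Gamma) x - (Real.log ∘ Real.Gamma) (x - 1) = Real.log (x - 1) := by
    simp only [Function.comp_apply]
    rw [hgam, Real.log_mul (ne_of_gt h1) (ne_of_gt hΓ1)]
    ring
  rw [e1] at hs
  have e2 : x - (x - 1) = 1 := by ring
  have e3 : x + ν - x = ν := by ring
  rw [e2, e3, div_one, le_div_iff₀ hν0] at hs
  have final : Real.Gamma x * (x - 1) ^ ν ≤ Real.Gamma (x + ν) := by
    have hlog : Real.log (Real.Gamma x * (x - 1) ^ ν) ≤ Real.log (Real.Gamma (x + ν)) := by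
      rw [Real.log_mul (ne_of_gt hΓx) (by positivity), Real.log_rpow h1]
      simp only [Function.comp_apply] at hs
      linarith
    exact (Real.log_le_log_iff (by positivity) hΓv).mp hlog
  rw [Real.rpow_neg h1.le, inv_eq_one_div, div_le_div_iff₀ hΓv (by positivity)]
  nlinarith [Real.rpow_pos_of_pos h1 ν]

lemma tendsto_gamma_ratio {ν γ : ℝ} (hν0 : 0 < ν) (hν1 : ν < 1) (hγ : -ν < γ) :
    Filter.Tendsto (fun k : ℕ =>
      Real.Gamma (ν * k + γ * k + γ + 1) / Real.Gamma (ν * k + γ * k + γ + ν + 1))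
      Filter.atTop (nhds 0) := by
  have hx : Filter.Tendsto (fun k : ℕ => ν * k + γ * k + γ + 1) Filter.atTop Filter.atTop := by
    have h1 : Filter.Tendsto (fun k : ℕ => (ν + γ) * (k : ℝ)) Filter.atTop Filter.atTop :=
      (tendsto_natCast_atTop_atTop).const_mul_atTop (by linarith)
    have h2 := Filter.tendsto_atTop_add_const_right Filter.atTop (γ + 1) h1
    exact h2.congr (fun k => by ring)
  have hb : Filter.Tendsto (fun k : ℕ => (ν * k + γ * k + γ + 1 - 1) ^ (-ν)) Filter.atTop (nhds 0) := by
    exact (_root_.tendsto_rpow_neg_atTop hν0).comp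
      (Filter.tendsto_atTop_add_const_right Filter.atTop (-1) hx |>.congr (fun k => by ring))
  refine squeeze_zero' ?_ ?_ hb
  · filter_upwards with k
    have h1 := Real.Gamma_pos_of_pos (show (0:ℝ) < ν * k + γ * k + γ + 1 by
      have : 0 ≤ (ν + γ) * (k:ℝ) := mul_nonneg (by linarith) (Nat.cast_nonneg k)
      nlinarith)
    have h2 := Real.Gamma_pos_of_pos (show (0:ℝ) < ν * k + γ * k + γ + ν + 1 by nlinarith [h1])
    positivity
  · filter_upwards [hx.eventually_ge_atTop 2] with k hk
    have e : ν * k + γ * k + γ + ν + 1 = (ν * k + γ * k + γ + 1) + ν := by ring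
    rw [e]
    exact Gamma_ratio_le hk hν0 hν1.le

lemma summable_master {ν γ : ℝ} (hν0 : 0 < ν) (hν1 : ν < 1) (hγ : -ν < γ) (A : ℝ) :
    Summable (fun k : ℕ => ((k : ℝ) + 1) * A ^ k * KS ν γ k) := by
  rcases eq_or_ne A 0 with rfl | hA
  · apply summable_of_ne_finset_zero (s := {0})
    intro k hk
    have hk0 : k ≠ 0 := by simpa using hk
    simp [zero_pow hk0]
  · have hKpos := KS_pos hν0 hν1 hγ
    have hΓpos : ∀ j : ℕ, 0 < Real.Gamma (ν * j + γ * j + γ + 1) / Real.Gamma (ν * j + γ * j + γ + ν + 1) := by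
      intro j
      exact div_pos (Real.Gamma_pos_of_pos (KS_arg_pos hν1 hγ j))
        (Real.Gamma_pos_of_pos (by linarith [KS_arg_pos hν1 hγ j]))
    apply summable_of_ratio_test_tendsto_lt_one zero_lt_one
    · filter_upwards with n
      exact mul_ne_zero (mul_ne_zero (by positivity) (pow_ne_zero _ hA)) (hKpos n).ne'
    · have h1 : Filter.Tendsto (fun n : ℕ => 1 + 1 / ((n:ℝ) + 1)) Filter.atTop (nhds (1 + 0)) :=
        tendsto_const_nhds.add tendsto_one_div_add_atTop_nhds_zero_nat
      have h2 : Filter.Tendsto (fun n : ℕ => |A| *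
          (Real.Gamma (ν * n + γ * n + γ + 1) / Real.Gamma (ν * n + γ * n + γ + ν + 1)))
          Filter.atTop (nhds (|A| * 0)) :=
        (tendsto_gamma_ratio hν0 hν1 hγ).const_mul |A|
      have h3 := h1.mul h2
      have e0 : ((1:ℝ) + 0) * (|A| * 0) = 0 := by ring
      rw [e0] at h3
      refine h3.congr (fun n => ?_)
      have hK := hKpos n
      have hg := hΓpos n
      have hn1 : (0:ℝ) < (n:ℝ) + 1 := by positivity
      have hA' : (0:ℝ) < |A| := abs_pos.mpr hA
      rw [Real.norm_eq_abs, Real.norm_eq_abs, KS_succ]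
      push_cast
      rw [show ((n:ℝ) + 1 + 1) * A ^ (n + 1) * (KS ν γ n *
          (Real.Gamma (ν * n + γ * n + γ + 1) / Real.Gamma (ν * n + γ * n + γ + ν + 1)))
          = (((n:ℝ) + 2) * (KS ν γ n *
          (Real.Gamma (ν * n + γ * n + γ + 1) / Real.Gamma (ν * n + γ * n + γ + ν + 1)))) * A ^ (n+1) from by ring,
        show ((n:ℝ) + 1) * A ^ n * KS ν γ n = (((n:ℝ)+1) * KS ν γ n) * A ^ n from by ring]
      simp only [abs_mul, abs_pow]
      rw [abs_of_pos hK, abs_of_pos hg, abs_of_pos (show (0:ℝ) < (n:ℝ)+2 by positivity),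
        abs_of_pos hn1, pow_succ]
      have hΓ2 : 0 < Real.Gamma (ν * n + γ * n + γ + ν + 1) :=
        Real.Gamma_pos_of_pos (by linarith [KS_arg_pos hν1 hγ n])
      rw [eq_div_iff (by positivity)]
      field_simp [hn1.ne', hΓ2.ne']
      ring

lemma rpow_mul_nat {t : ℝ} (ht : 0 ≤ t) (a : ℝ) (k : ℕ) :
    (t ^ a) ^ k = t ^ (a * k) := by
  rw [← Real.rpow_natCast (t ^ a) k, ← Real.rpow_mul ht]

/-- Summability of `(A)^k * KS k` type series (with arbitrary sign base). -/
lemma summable_pow_KS {ν γ : ℝ} (hν0 : 0 < ν) (hν1 : ν < 1) (hγ : -ν < γ) (A : ℝ) :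
    Summable (fun k : ℕ => A ^ k * KS ν γ k) := by
  refine Summable.of_norm_bounded (summable_master hν0 hν1 hγ |A|) (fun k => ?_)
  have hK := KS_pos hν0 hν1 hγ k
  rw [Real.norm_eq_abs, abs_mul, abs_pow, abs_of_pos hK]
  have h1 : (0:ℝ) ≤ |A| ^ k := pow_nonneg (abs_nonneg A) k
  nlinarith [mul_nonneg (Nat.cast_nonneg (α := ℝ) k) (mul_nonneg h1 hK.le)]

/-- Summability with an extra linear factor. -/
lemma summable_k_pow_KS {ν γ : ℝ} (hν0 : 0 < ν) (hν1 : ν < 1) (hγ : -ν < γ) (A : ℝ) :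
    Summable (fun k : ℕ => (k : ℝ) * A ^ k * KS ν γ k) := by
  refine Summable.of_norm_bounded (summable_master hν0 hν1 hγ |A|) (fun k => ?_)
  have hK := KS_pos hν0 hν1 hγ k
  rw [Real.norm_eq_abs, abs_mul, abs_mul, abs_pow, abs_of_pos hK,
    abs_of_nonneg (Nat.cast_nonneg (α := ℝ) k)]
  have h1 : (0:ℝ) ≤ |A| ^ k := pow_nonneg (abs_nonneg A) k
  nlinarith [mul_nonneg h1 hK.le]

lemma deriv_f {ν γ lam : ℝ} (hν0 : 0 < ν) (hν1 : ν < 1) (hγ : -ν < γ)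
    (f : ℝ → ℝ) (hf : ∀ t : ℝ, f t = ∑' k : ℕ, (lam * t ^ (ν + γ)) ^ k * KS ν γ k)
    {s : ℝ} (hs : 0 < s) :
    HasDerivAt f
      (∑' k : ℕ, lam ^ k * KS ν γ k * ((ν + γ) * k * s ^ ((ν + γ) * k - 1))) s := by
  have hμ : (0:ℝ) < ν + γ := by linarith
  set g : ℕ → ℝ → ℝ := fun k x => lam ^ k * KS ν γ k * x ^ ((ν + γ) * k) with hg
  set g' : ℕ → ℝ → ℝ := fun k x =>
    lam ^ k * KS ν γ k * ((ν + γ) * k * x ^ ((ν + γ) * k - 1)) with hg'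
  set u : ℕ → ℝ := fun k =>
    (2 * (ν + γ) / s) * ((k : ℝ) * (|lam| * (s + 1) ^ (ν + γ)) ^ k * KS ν γ k) with hu
  have husum : Summable u := (summable_k_pow_KS hν0 hν1 hγ _).mul_left _
  have hopen : IsOpen (Set.Ioo (s/2) (s+1)) := isOpen_Ioo
  have hconn : IsPreconnected (Set.Ioo (s/2) (s+1)) := isPreconnected_Ioo
  have hmem : s ∈ Set.Ioo (s/2) (s+1) := ⟨by linarith, by linarith⟩
  have hgd : ∀ (k : ℕ) (y : ℝ), y ∈ Set.Ioo (s/2) (s+1) → HasDerivAt (g k) (g' k y) y := by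
    intro k y hy
    have hy0 : 0 < y := lt_trans (by linarith) hy.1
    have := (Real.hasDerivAt_rpow_const (x := y) (p := (ν + γ) * k) (Or.inl hy0.ne')).const_mul
      (lam ^ k * KS ν γ k)
    simpa [hg, hg', mul_assoc] using this
  have hbound : ∀ (k : ℕ) (y : ℝ), y ∈ Set.Ioo (s/2) (s+1) → ‖g' k y‖ ≤ u k := by
    intro k y hy
    have hy0 : 0 < y := lt_trans (by linarith) hy.1
    have hK := KS_pos hν0 hν1 hγ k
    have hkc : (0:ℝ) ≤ (ν + γ) * k := mul_nonneg hμ.le (Nat.cast_nonneg k)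
    have hyp : y ^ ((ν + γ) * k - 1) ≤ (s + 1) ^ ((ν + γ) * k) * (2 / s) := by
      have e : y ^ ((ν + γ) * k - 1) = y ^ ((ν + γ) * k) * y⁻¹ := by
        rw [Real.rpow_sub hy0, Real.rpow_one, div_eq_mul_inv]
      rw [e]
      have h1 : y ^ ((ν + γ) * k) ≤ (s + 1) ^ ((ν + γ) * k) :=
        Real.rpow_le_rpow hy0.le (by linarith [hy.2]) hkc
      have h2 : y⁻¹ ≤ 2 / s := by
        have := one_div_le_one_div_of_le (by linarith : (0:ℝ) < s / 2) hy.1.le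
        rw [one_div, one_div_div] at this
        simpa using this
      have h3 : (0:ℝ) ≤ y⁻¹ := by positivity
      have h4 : (0:ℝ) ≤ (s + 1) ^ ((ν + γ) * k) := Real.rpow_nonneg (by linarith) _
      exact mul_le_mul h1 h2 h3 h4
    calc ‖g' k y‖ = (|lam| ^ k * KS ν γ k * ((ν + γ) * k)) * y ^ ((ν + γ) * k - 1) := by
          rw [hg']
          simp only [Real.norm_eq_abs, abs_mul, abs_pow, abs_of_pos hK,
            abs_of_nonneg hkc, abs_of_nonneg (Real.rpow_nonneg hy0.le ((ν + γ) * k - 1))]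
          ring
      _ ≤ (|lam| ^ k * KS ν γ k * ((ν + γ) * k)) * ((s + 1) ^ ((ν + γ) * k) * (2 / s)) := by
          refine mul_le_mul_of_nonneg_left hyp (by positivity)
      _ = u k := by
          rw [hu]
          simp only
          rw [mul_pow, rpow_mul_nat (by linarith : (0:ℝ) ≤ s + 1)]
          field_simp
  have hx0sum : Summable (fun k => g k s) := by
    refine (summable_pow_KS hν0 hν1 hγ (lam * s ^ (ν + γ))).congr (fun k => ?_)
    rw [hg]
    simp only
    rw [mul_pow, rpow_mul_nat hs.le]
    ring
  have hder := hasDerivAt_tsum_of_isPreconnected husum hopen hconn hgd hbound hmem hx0sum hmem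
  refine HasDerivAt.congr_of_eventuallyEq hder ?_
  filter_upwards [(isOpen_Ioi (a := (0:ℝ))).mem_nhds hs] with x hx
  rw [hf x]
  refine tsum_congr fun k => ?_
  rw [hg]
  simp only
  rw [mul_pow, rpow_mul_nat (le_of_lt hx)]
  ring

/-- Real Beta integral. -/
lemma beta_real {a b : ℝ} (ha : 0 < a) (hb : 0 < b) :
    ∫ x in (0:ℝ)..1, x ^ (a - 1) * (1 - x) ^ (b - 1)
      = Real.Gamma a * Real.Gamma b / Real.Gamma (a + b) := by
  have hΓab : Real.Gamma (a + b) ≠ 0 := (Real.Gamma_pos_of_pos (by linarith)).ne'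
  have key := Complex.Gamma_mul_Gamma_eq_betaIntegral (s := (a : ℂ)) (t := (b : ℂ))
    (by simpa using ha) (by simpa using hb)
  have hbeta : Complex.betaIntegral a b
      = ((∫ x in (0:ℝ)..1, x ^ (a - 1) * (1 - x) ^ (b - 1) : ℝ) : ℂ) := by
    rw [Complex.betaIntegral, ← intervalIntegral.integral_ofReal]
    apply intervalIntegral.integral_congr
    intro x hx
    rw [Set.uIcc_of_le (by norm_num : (0:ℝ) ≤ 1)] at hx
    obtain ⟨hx0, hx1⟩ := hx
    show (x:ℂ) ^ ((a:ℂ) - 1) * (1 - (x:ℂ)) ^ ((b:ℂ) - 1)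
      = ((x ^ (a - 1) * (1 - x) ^ (b - 1) : ℝ) : ℂ)
    rw [Complex.ofReal_mul, Complex.ofReal_cpow hx0, Complex.ofReal_cpow (by linarith)]
    push_cast
    ring
  rw [hbeta, ← Complex.ofReal_add, Complex.Gamma_ofReal, Complex.Gamma_ofReal,
    Complex.Gamma_ofReal, ← Complex.ofReal_mul, ← Complex.ofReal_mul] at key
  have := Complex.ofReal_injective key
  rw [eq_div_iff hΓab]
  linarith [this]

lemma beta_scaled {t b ν : ℝ} (ht : 0 < t) (hb : 0 < b) (hν0 : 0 < ν) (hν1 : ν < 1) :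
    ∫ s in (0:ℝ)..t, (t - s) ^ (-ν) * s ^ (b - 1)
      = Real.Gamma b * Real.Gamma (1 - ν) / Real.Gamma (b + (1 - ν)) * t ^ (b - ν) := by
  have h := intervalIntegral.integral_comp_mul_right
    (a := (0:ℝ)) (b := (1:ℝ)) (f := fun s => (t - s) ^ (-ν) * s ^ (b - 1)) (ne_of_gt ht)
  simp only [zero_mul, one_mul, smul_eq_mul] at h
  -- h : ∫ x in 0..1, f (x * t) = t⁻¹ * ∫ x in 0..t, f x
  have e1 : ∫ x in (0:ℝ)..1, (t - x * t) ^ (-ν) * (x * t) ^ (b - 1)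
      = (t ^ (-ν) * t ^ (b - 1)) * ∫ x in (0:ℝ)..1, x ^ (b - 1) * (1 - x) ^ ((1 - ν) - 1) := by
    rw [← intervalIntegral.integral_const_mul]
    apply intervalIntegral.integral_congr
    intro x hx
    rw [Set.uIcc_of_le (by norm_num : (0:ℝ) ≤ 1)] at hx
    obtain ⟨hx0, hx1⟩ := hx
    show (t - x * t) ^ (-ν) * (x * t) ^ (b - 1)
      = t ^ (-ν) * t ^ (b - 1) * (x ^ (b - 1) * (1 - x) ^ (1 - ν - 1))
    have e2 : t - x * t = t * (1 - x) := by ring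
    rw [e2, Real.mul_rpow ht.le (by linarith), Real.mul_rpow hx0 ht.le]
    have e3 : (1 - ν) - 1 = -ν := by ring
    rw [e3]
    ring
  rw [e1, beta_real hb (by linarith)] at h
  have ht' : t ≠ 0 := ne_of_gt ht
  have e4 : t * (t ^ (-ν) * t ^ (b - 1)) = t ^ (b - ν) := by
    nth_rewrite 1 [← Real.rpow_one t]
    rw [← Real.rpow_add ht, ← Real.rpow_add ht]
    congr 1
    ring
  field_simp at h
  rw [← h]
  rw [show Real.Gamma b * Real.Gamma (1 - ν) / Real.Gamma (b + (1 - ν)) * t ^ (b - ν)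
    = (t * (t ^ (-ν) * t ^ (b - 1))) * (Real.Gamma b * Real.Gamma (1 - ν) / Real.Gamma (b + (1 - ν))) from by rw [e4]; ring]
  ring

lemma integrableOn_beta {t b ν : ℝ} (ht : 0 < t) (hb : 0 < b) (hν0 : 0 < ν) (hν1 : ν < 1) :
    MeasureTheory.IntegrableOn (fun s => (t - s) ^ (-ν) * s ^ (b - 1))
      (Set.Ioc 0 t) MeasureTheory.volume := by
  rw [← intervalIntegrable_iff_integrableOn_Ioc_of_le ht.le]
  have half : (0:ℝ) < t / 2 := by linarith
  have p1 : IntervalIntegrable (fun s => (t - s) ^ (-ν) * s ^ (b - 1))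
      MeasureTheory.volume 0 (t / 2) := by
    rw [intervalIntegrable_iff_integrableOn_Ioc_of_le (by linarith)]
    have hg : MeasureTheory.IntegrableOn (fun s : ℝ => s ^ (b - 1)) (Set.Ioc 0 (t / 2))
        MeasureTheory.volume := by
      rw [← intervalIntegrable_iff_integrableOn_Ioc_of_le (by linarith)]
      exact intervalIntegral.intervalIntegrable_rpow' (by linarith)
    refine MeasureTheory.Integrable.bdd_mul (c := (t / 2) ^ (-ν)) hg ?_ ?_
    · exact ((measurable_const.sub measurable_id).pow measurable_const).aestronglyMeasurable
    · rw [MeasureTheory.ae_restrict_iff' measurableSet_Ioc]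
      filter_upwards with s hs
      rw [Real.norm_eq_abs, abs_of_nonneg (Real.rpow_nonneg (by linarith [hs.1, hs.2] : (0:ℝ) ≤ t - s) _)]
      exact Real.rpow_le_rpow_of_nonpos half (by linarith [hs.2]) (by linarith)
  have p2 : IntervalIntegrable (fun s => (t - s) ^ (-ν) * s ^ (b - 1))
      MeasureTheory.volume (t / 2) t := by
    rw [intervalIntegrable_iff_integrableOn_Ioc_of_le (by linarith)]
    have hg : MeasureTheory.IntegrableOn (fun s : ℝ => (t - s) ^ (-ν)) (Set.Ioc (t / 2) t)
        MeasureTheory.volume := by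
      rw [← intervalIntegrable_iff_integrableOn_Ioc_of_le (by linarith)]
      have h0 : IntervalIntegrable (fun x : ℝ => x ^ (-ν)) MeasureTheory.volume 0 (t / 2) :=
        intervalIntegral.intervalIntegrable_rpow' (by linarith)
      have h1 := (h0.comp_sub_left t).symm
      simpa [show t - t / 2 = t / 2 by ring] using h1
    have key := MeasureTheory.Integrable.bdd_mul (f := fun s : ℝ => s ^ (b - 1))
      (c := (t / 2) ^ (b - 1) + t ^ (b - 1)) hg ?_ ?_
    · refine key.congr (Filter.Eventually.of_forall fun s => mul_comm _ _)
    · exact (measurable_id.pow measurable_const).aestronglyMeasurable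
    · rw [MeasureTheory.ae_restrict_iff' measurableSet_Ioc]
      filter_upwards with s hs
      have hs0 : (0:ℝ) < s := lt_trans half hs.1
      rw [Real.norm_eq_abs, abs_of_nonneg (Real.rpow_nonneg hs0.le _)]
      rcases le_or_gt (b - 1) 0 with hc | hc
      · have h1 : s ^ (b - 1) ≤ (t / 2) ^ (b - 1) :=
          Real.rpow_le_rpow_of_nonpos half hs.1.le hc
        have h2 : (0:ℝ) ≤ t ^ (b - 1) := Real.rpow_nonneg ht.le _
        linarith
      · have h1 : s ^ (b - 1) ≤ t ^ (b - 1) :=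
          Real.rpow_le_rpow hs0.le hs.2 hc.le
        have h2 : (0:ℝ) ≤ (t / 2) ^ (b - 1) := Real.rpow_nonneg half.le _
        linarith
  exact p1.trans p2


lemma KS_key {ν γ : ℝ} (hν0 : 0 < ν) (hν1 : ν < 1) (hγ : -ν < γ) (j : ℕ) :
    KS ν γ (j + 1) * ((ν + γ) * ((j : ℝ) + 1)) *
      (Real.Gamma ((ν + γ) * ((j : ℝ) + 1)) * Real.Gamma (1 - ν) /
        Real.Gamma ((ν + γ) * ((j : ℝ) + 1) + (1 - ν)))
      = Real.Gamma (1 - ν) * KS ν γ j := by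
  have hμ : (0:ℝ) < ν + γ := by linarith
  have hX : (0:ℝ) < (ν + γ) * ((j : ℝ) + 1) := by positivity
  have hXν : (0:ℝ) < (ν + γ) * ((j : ℝ) + 1) + (1 - ν) := by linarith
  have e1 : Real.Gamma ((ν + γ) * ((j : ℝ) + 1) + 1)
      = (ν + γ) * ((j : ℝ) + 1) * Real.Gamma ((ν + γ) * ((j : ℝ) + 1)) :=
    Real.Gamma_add_one hX.ne'
  have e2 : ν * (j:ℝ) + γ * (j:ℝ) + γ + 1 = (ν + γ) * ((j : ℝ) + 1) + (1 - ν) := by ring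
  have e3 : ν * (j:ℝ) + γ * (j:ℝ) + γ + ν + 1 = (ν + γ) * ((j : ℝ) + 1) + 1 := by ring
  rw [KS_succ, e2, e3, e1]
  have hG0 := Real.Gamma_pos_of_pos hX
  have hG1 := Real.Gamma_pos_of_pos hXν
  field_simp

lemma int_term {ν : ℝ} (hν0 : 0 < ν) (hν1 : ν < 1) {t : ℝ} (ht : 0 < t)
    (C : ℝ) {b : ℝ} (hb : 0 < b) :
    ∫ s in Set.Ioc (0:ℝ) t, C * ((t - s) ^ (-ν) * s ^ (b - 1))
      = C * (Real.Gamma b * Real.Gamma (1 - ν) / Real.Gamma (b + (1 - ν)) * t ^ (b - ν)) := by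
  rw [MeasureTheory.integral_const_mul, ← intervalIntegral.integral_of_le ht.le,
    beta_scaled ht hb hν0 hν1]

lemma summable_shift {ν γ : ℝ} (hν0 : 0 < ν) (hν1 : ν < 1) (hγ : -ν < γ) (c : ℝ)
    {t : ℝ} (ht : 0 < t) :
    Summable (fun j : ℕ =>
      Real.Gamma (1 - ν) * c ^ (j + 1) * KS ν γ j * t ^ ((ν + γ) * ((j : ℝ) + 1) - ν)) := by
  have base : Summable (fun j : ℕ => (c * t ^ (ν + γ)) ^ j * KS ν γ j) :=
    summable_pow_KS hν0 hν1 hγ _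
  refine (base.mul_left (Real.Gamma (1 - ν) * c * t ^ γ)).congr (fun j => ?_)
  rw [show (ν + γ) * ((j : ℝ) + 1) - ν = γ + (ν + γ) * (j:ℝ) from by ring,
    Real.rpow_add ht γ ((ν + γ) * (j:ℝ)), mul_pow, rpow_mul_nat ht.le, pow_succ]
  ring


theorem stmt7 (ν γ lam : ℝ) (hν : ν ∈ Set.Ioo (0:ℝ) 1) (hγ : -ν < γ)
    (f : ℝ → ℝ)
    (hf : ∀ t : ℝ, f t = ∑' k : ℕ, (lam * t ^ (ν + γ)) ^ k *
        ∏ j ∈ Finset.range k,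
          Real.Gamma (ν * j + γ * j + γ + 1) / Real.Gamma (ν * j + γ * j + γ + ν + 1)) :
    (∀ t : ℝ, 0 ≤ t → Summable (fun k : ℕ => (lam * t ^ (ν + γ)) ^ k *
        ∏ j ∈ Finset.range k,
          Real.Gamma (ν * j + γ * j + γ + 1) / Real.Gamma (ν * j + γ * j + γ + ν + 1))) ∧
    f 0 = 1 ∧
    (∀ t : ℝ, 0 < t →
      (1 / Real.Gamma (1 - ν)) * ∫ s in (0:ℝ)..t, (t - s) ^ (-ν) * deriv f s =
        lam * t ^ γ * f t) := by
  obtain ⟨hν0, hν1⟩ := hν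
  have hμ : (0:ℝ) < ν + γ := by linarith
  have hΓν : (0:ℝ) < Real.Gamma (1 - ν) := Real.Gamma_pos_of_pos (by linarith)
  have hfK : ∀ x : ℝ, f x = ∑' k : ℕ, (lam * x ^ (ν + γ)) ^ k * KS ν γ k := hf
  refine ⟨?_, ?_, ?_⟩
  · intro t _
    exact summable_pow_KS hν0 hν1 hγ (lam * t ^ (ν + γ))
  · rw [hfK 0, Real.zero_rpow hμ.ne', mul_zero]
    rw [tsum_eq_single 0 (fun k hk => by rw [zero_pow hk, zero_mul])]
    simp [KS]
  · intro t ht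
    have hderiv : ∀ s : ℝ, 0 < s → deriv f s
        = ∑' k : ℕ, lam ^ k * KS ν γ k * ((ν + γ) * k * s ^ ((ν + γ) * k - 1)) :=
      fun s hs => (deriv_f hν0 hν1 hγ f hfK hs).deriv
    set h : ℕ → ℝ → ℝ := fun k s =>
      (lam ^ k * KS ν γ k * ((ν + γ) * k)) * ((t - s) ^ (-ν) * s ^ ((ν + γ) * k - 1)) with hh
    have hmeas : ∀ k, MeasureTheory.AEStronglyMeasurable (h k)
        (MeasureTheory.volume.restrict (Set.Ioc 0 t)) := fun k =>
      (measurable_const.mul (((measurable_const.sub measurable_id).pow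
        measurable_const).mul (measurable_id.pow measurable_const))).aestronglyMeasurable
    have hb : ∀ k : ℕ, k ≠ 0 → (0:ℝ) < (ν + γ) * k := by
      intro k hk
      have h1 : 1 ≤ (k : ℝ) := by exact_mod_cast Nat.one_le_iff_ne_zero.mpr hk
      nlinarith
    have hzero : h 0 = fun _ => 0 := by
      funext s
      simp [hh]
    have hint : ∀ k : ℕ, MeasureTheory.IntegrableOn (h k) (Set.Ioc 0 t) := by
      intro k
      rcases eq_or_ne k 0 with rfl | hk
      · rw [hzero]
        exact MeasureTheory.integrable_zero _ _ _
      · exact (integrableOn_beta ht (hb k hk) hν0 hν1).const_mul _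
    have hnormfun : ∀ k : ℕ, Set.EqOn (fun s => ‖h k s‖)
        (fun s => |lam ^ k * KS ν γ k * ((ν + γ) * k)| *
          ((t - s) ^ (-ν) * s ^ ((ν + γ) * k - 1))) (Set.Ioc 0 t) := by
      intro k s hs
      simp only [hh, Real.norm_eq_abs, abs_mul]
      rw [abs_of_nonneg (Real.rpow_nonneg (by linarith [hs.2] : (0:ℝ) ≤ t - s) _),
        abs_of_nonneg (Real.rpow_nonneg hs.1.le _)]
    have hVal : ∀ j : ℕ, (∫ s in Set.Ioc (0:ℝ) t, h (j + 1) s)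
        = Real.Gamma (1 - ν) * lam ^ (j + 1) * KS ν γ j
          * t ^ ((ν + γ) * ((j : ℝ) + 1) - ν) := by
      intro j
      have hbj := hb (j + 1) (Nat.succ_ne_zero j)
      simp only [hh]
      rw [int_term hν0 hν1 ht
        (lam ^ (j + 1) * KS ν γ (j + 1) * ((ν + γ) * ((j + 1 : ℕ) : ℝ))) hbj]
      have hk := KS_key hν0 hν1 hγ j
      push_cast
      linear_combination (lam ^ (j + 1) * t ^ ((ν + γ) * ((j:ℝ) + 1) - ν)) * hk
    have hNval : ∀ j : ℕ, (∫ s in Set.Ioc (0:ℝ) t, ‖h (j + 1) s‖)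
        = Real.Gamma (1 - ν) * |lam| ^ (j + 1) * KS ν γ j
          * t ^ ((ν + γ) * ((j : ℝ) + 1) - ν) := by
      intro j
      rw [MeasureTheory.setIntegral_congr_fun measurableSet_Ioc (hnormfun (j + 1))]
      rw [int_term hν0 hν1 ht
        |lam ^ (j + 1) * KS ν γ (j + 1) * ((ν + γ) * ((j + 1 : ℕ) : ℝ))| (hb (j + 1) (Nat.succ_ne_zero j))]
      have hK := KS_pos hν0 hν1 hγ (j + 1)
      have hbj := hb (j + 1) (Nat.succ_ne_zero j)
      rw [abs_mul, abs_mul, abs_pow, abs_of_pos hK, abs_of_pos hbj]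
      have hk := KS_key hν0 hν1 hγ j
      push_cast
      linear_combination (|lam| ^ (j + 1) * t ^ ((ν + γ) * ((j:ℝ) + 1) - ν)) * hk
    have hNsummable : Summable (fun k : ℕ => ∫ s in Set.Ioc (0:ℝ) t, ‖h k s‖) := by
      rw [← summable_nat_add_iff 1]
      exact (summable_shift hν0 hν1 hγ |lam| ht).congr (fun j => (hNval j).symm)
    have hlint : (∑' k : ℕ, ∫⁻ s, ‖h k s‖ₑ
        ∂(MeasureTheory.volume.restrict (Set.Ioc 0 t))) ≠ ⊤ := by
      have e1 : ∀ k : ℕ, (∫⁻ s, ‖h k s‖ₑ ∂(MeasureTheory.volume.restrict (Set.Ioc 0 t)))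
          = ENNReal.ofReal (∫ s in Set.Ioc (0:ℝ) t, ‖h k s‖) := fun k =>
        (MeasureTheory.ofReal_integral_norm_eq_lintegral_enorm (hint k)).symm
      rw [tsum_congr e1, ← ENNReal.ofReal_tsum_of_nonneg
        (fun k => MeasureTheory.integral_nonneg (fun s => norm_nonneg _)) hNsummable]
      exact ENNReal.ofReal_ne_top
    have interchange : (∫ s in Set.Ioc (0:ℝ) t, ∑' k : ℕ, h k s)
        = ∑' k : ℕ, ∫ s in Set.Ioc (0:ℝ) t, h k s :=
      MeasureTheory.integral_tsum hmeas hlint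
    have eqInt : (∫ s in (0:ℝ)..t, (t - s) ^ (-ν) * deriv f s)
        = ∫ s in Set.Ioc (0:ℝ) t, ∑' k : ℕ, h k s := by
      rw [intervalIntegral.integral_of_le ht.le]
      refine MeasureTheory.setIntegral_congr_fun measurableSet_Ioc (fun s hs => ?_)
      rw [hderiv s hs.1, ← tsum_mul_left]
      refine tsum_congr fun k => ?_
      simp only [hh]
      ring
    have hSumVal : Summable (fun k : ℕ => ∫ s in Set.Ioc (0:ℝ) t, h k s) := by
      rw [← summable_nat_add_iff 1]
      exact (summable_shift hν0 hν1 hγ lam ht).congr (fun j => (hVal j).symm)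
    have hW : (∑' k : ℕ, ∫ s in Set.Ioc (0:ℝ) t, h k s)
        = Real.Gamma (1 - ν) * (lam * t ^ γ * f t) := by
      rw [Summable.tsum_eq_zero_add hSumVal]
      have h0 : (∫ s in Set.Ioc (0:ℝ) t, h 0 s) = 0 := by
        rw [hzero]
        simp
      rw [h0, zero_add, tsum_congr hVal, hfK t, ← tsum_mul_left, ← tsum_mul_left]
      refine tsum_congr fun j => ?_
      rw [show (ν + γ) * ((j : ℝ) + 1) - ν = γ + (ν + γ) * (j:ℝ) from by ring,
        Real.rpow_add ht γ ((ν + γ) * (j:ℝ)), mul_pow, rpow_mul_nat ht.le, pow_succ]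
      ring
    rw [eqInt, interchange, hW]
    field_simp
end

section
/- For α ∈ (0,1), H ∈ (0,1), and t > 0, define û(β,t) = E_α(-β² t^{2H α}/2^α), where E_α is the one-parameter Mittag–Leffler function. Then (2H)^α t^{-2Hα} I_{2H}^{0,-α} û(β,·)(t) = -H^α β² û(β,t) + (2H)^α t^{-2Hα}/Γ(1-α), where I_{2H}^{0,-α} acts termwise on the power series via I_{2H}^{0,-α} t^{2Hαk} = (Γ(αk+1)/Γ(αk+1-α)) t^{2Hαk}. -/
open Real Filter

private lemma gamma_ratio (α x : ℝ) (hα0 : 0 < α) (hα1 : α < 1) (hx : 0 < x) :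
    x * Real.Gamma x ≤ Real.Gamma (x + α) * (x + α) ^ (1 - α) := by
  have hy : 0 < x + α := by linarith
  have hΓy : 0 < Real.Gamma (x + α) := Real.Gamma_pos_of_pos hy
  have hΓx : 0 < Real.Gamma x := Real.Gamma_pos_of_pos hx
  have hconv := Real.convexOn_log_Gamma
  have key := hconv.2 (Set.mem_Ioi.mpr hy)
      (Set.mem_Ioi.mpr (by linarith : (0:ℝ) < x + α + 1))
      hα0.le (by linarith : (0:ℝ) ≤ 1 - α) (by ring)
  have hpt : α • (x + α) + (1 - α) • (x + α + 1) = x + 1 := by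
    simp [smul_eq_mul]; ring
  rw [hpt] at key
  simp only [Function.comp_apply, smul_eq_mul] at key
  rw [Real.Gamma_add_one hx.ne', Real.Gamma_add_one hy.ne'] at key
  rw [Real.log_mul hx.ne' hΓx.ne', Real.log_mul hy.ne' hΓy.ne'] at key
  have key2 : Real.log (x * Real.Gamma x) ≤
      Real.log (Real.Gamma (x + α) * (x + α) ^ (1 - α)) := by
    rw [Real.log_mul hx.ne' hΓx.ne',
      Real.log_mul hΓy.ne' (Real.rpow_pos_of_pos hy _).ne',
      Real.log_rpow hy]
    nlinarith [key]
  exact (Real.log_le_log_iff (by positivity) (by positivity)).mp key2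

private lemma summable_ml (α b z : ℝ) (hα0 : 0 < α) (hα1 : α < 1) (hb : 0 < b) :
    Summable (fun k : ℕ => z ^ k / Real.Gamma (α * k + b)) := by
  apply summable_of_ratio_norm_eventually_le (r := 1/2) (by norm_num)
  set M : ℝ := |z| + 1 with hM
  have hM0 : 0 < M := by positivity
  have hx_top : Tendsto (fun k : ℕ => α * k + b) atTop atTop := by
    apply Filter.tendsto_atTop_add_const_right
    exact (tendsto_natCast_atTop_atTop (R := ℝ)).const_mul_atTop hα0
  have h1 : ∀ᶠ k : ℕ in atTop, (α * k + b) ^ (-α) < 1 / (8 * M) :=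
    ((tendsto_rpow_neg_atTop hα0).comp hx_top).eventually_lt_const (by positivity)
  have h2 : ∀ᶠ k : ℕ in atTop, max 1 α ≤ α * k + b :=
    hx_top.eventually_ge_atTop _
  filter_upwards [h1, h2] with k hk1 hk2
  set x : ℝ := α * k + b with hxdef
  have hx1 : (1:ℝ) ≤ x := le_trans (le_max_left _ _) hk2
  have hxα : α ≤ x := le_trans (le_max_right _ _) hk2
  have hx0 : (0:ℝ) < x := by linarith
  have hy0 : (0:ℝ) < x + α := by linarith
  have hΓx : 0 < Real.Gamma x := Real.Gamma_pos_of_pos hx0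
  have hΓy : 0 < Real.Gamma (x + α) := Real.Gamma_pos_of_pos hy0
  -- main gamma estimate
  have hgr := gamma_ratio α x hα0 hα1 hx0
  -- bound (x+α)^(1-α) ≤ 2 * x^(1-α)
  have hb1 : (x + α) ^ (1 - α) ≤ (2 * x) ^ (1 - α) := by
    apply Real.rpow_le_rpow hy0.le (by linarith) (by linarith)
  have hb2 : (2 * x) ^ (1 - α) = 2 ^ (1 - α) * x ^ (1 - α) :=
    Real.mul_rpow (by norm_num) hx0.le
  have hb3 : (2:ℝ) ^ (1 - α) ≤ 2 := by
    calc (2:ℝ) ^ (1 - α) ≤ 2 ^ (1:ℝ) :=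
          Real.rpow_le_rpow_of_exponent_le (by norm_num) (by linarith)
      _ = 2 := Real.rpow_one 2
  have hb4 : x ^ (1 - α) = x * x ^ (-α) := by
    rw [show (1 - α) = 1 + (-α) by ring, Real.rpow_add hx0, Real.rpow_one]
  have hxn : 0 < x ^ (-α) := Real.rpow_pos_of_pos hx0 _
  have hxr : (0:ℝ) ≤ x ^ (1 - α) := (Real.rpow_pos_of_pos hx0 _).le
  have hkey : M * (x + α) ^ (1 - α) ≤ x / 4 := by
    have : M * (x + α) ^ (1 - α) ≤ M * (2 * (x * x ^ (-α))) := by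
      apply mul_le_mul_of_nonneg_left _ hM0.le
      calc (x + α) ^ (1 - α) ≤ 2 ^ (1 - α) * x ^ (1 - α) := by rw [← hb2]; exact hb1
        _ ≤ 2 * x ^ (1 - α) := mul_le_mul_of_nonneg_right hb3 hxr
        _ = 2 * (x * x ^ (-α)) := by rw [hb4]
    have h8 : M * (2 * (x * x ^ (-α))) ≤ M * (2 * (x * (1 / (8 * M)))) := by
      apply mul_le_mul_of_nonneg_left _ hM0.le
      apply mul_le_mul_of_nonneg_left _ (by norm_num)
      exact mul_le_mul_of_nonneg_left hk1.le hx0.le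
    have : M * (x + α) ^ (1 - α) ≤ M * (2 * (x * (1 / (8 * M)))) := le_trans this h8
    calc M * (x + α) ^ (1 - α) ≤ M * (2 * (x * (1 / (8 * M)))) := this
      _ = x / 4 := by field_simp; ring
  -- combine: |z| * Γ x ≤ (1/2) * Γ (x+α)
  have hzΓ : |z| * Real.Gamma x ≤ (1/2) * Real.Gamma (x + α) := by
    have h1' : |z| * (x * Real.Gamma x) ≤ |z| * (Real.Gamma (x + α) * (x + α) ^ (1 - α)) :=
      mul_le_mul_of_nonneg_left hgr (abs_nonneg z)
    have h2' : |z| * (Real.Gamma (x + α) * (x + α) ^ (1 - α)) ≤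
        Real.Gamma (x + α) * (M * (x + α) ^ (1 - α)) := by
      have hzM : |z| ≤ M := by rw [hM]; linarith
      have hp : 0 ≤ (x + α) ^ (1 - α) := (Real.rpow_pos_of_pos hy0 _).le
      calc |z| * (Real.Gamma (x + α) * (x + α) ^ (1 - α))
          = (Real.Gamma (x + α) * (x + α) ^ (1 - α)) * |z| := by ring
        _ ≤ (Real.Gamma (x + α) * (x + α) ^ (1 - α)) * M :=
            mul_le_mul_of_nonneg_left hzM (by positivity)
        _ = Real.Gamma (x + α) * (M * (x + α) ^ (1 - α)) := by ring
    have h3' : Real.Gamma (x + α) * (M * (x + α) ^ (1 - α)) ≤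
        Real.Gamma (x + α) * (x / 4) :=
      mul_le_mul_of_nonneg_left hkey hΓy.le
    have : |z| * (x * Real.Gamma x) ≤ Real.Gamma (x + α) * (x / 4) :=
      le_trans h1' (le_trans h2' h3')
    nlinarith [hΓx, hΓy, abs_nonneg z, hx1]
  -- final ratio inequality
  have hcast : α * (↑(k + 1) : ℝ) + b = x + α := by push_cast [hxdef]; ring
  rw [hcast]
  have e1 : ‖z ^ (k + 1) / Real.Gamma (x + α)‖ = |z| ^ (k + 1) / Real.Gamma (x + α) := by
    rw [norm_div, Real.norm_eq_abs, Real.norm_eq_abs, abs_pow, abs_of_pos hΓy]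
  have e2 : ‖z ^ k / Real.Gamma x‖ = |z| ^ k / Real.Gamma x := by
    rw [norm_div, Real.norm_eq_abs, Real.norm_eq_abs, abs_pow, abs_of_pos hΓx]
  rw [e1, e2, div_le_iff₀ hΓy, pow_succ]
  have hrw : 1 / 2 * (|z| ^ k / Real.Gamma x) * Real.Gamma (x + α)
      = |z| ^ k * (1 / 2 * Real.Gamma (x + α)) / Real.Gamma x := by ring
  rw [hrw, le_div_iff₀ hΓx]
  calc |z| ^ k * |z| * Real.Gamma x = |z| ^ k * (|z| * Real.Gamma x) := by ring
    _ ≤ |z| ^ k * (1 / 2 * Real.Gamma (x + α)) :=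
        mul_le_mul_of_nonneg_left hzΓ (pow_nonneg (abs_nonneg z) k)

theorem stmt12 (α H β t : ℝ) (hα : α ∈ Set.Ioo (0:ℝ) 1) (hH : H ∈ Set.Ioo (0:ℝ) 1)
    (ht : 0 < t) :
    (2 * H) ^ α * t ^ (-(2 * H * α)) *
        (∑' k : ℕ, (-(β ^ 2) / 2 ^ α) ^ k * t ^ (2 * H * α * k) /
          Real.Gamma (α * k + 1 - α)) =
      -(H ^ α) * β ^ 2 *
          (∑' k : ℕ, (-(β ^ 2) / 2 ^ α) ^ k * t ^ (2 * H * α * k) /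
            Real.Gamma (α * k + 1)) +
        (2 * H) ^ α * t ^ (-(2 * H * α)) / Real.Gamma (1 - α) := by
  obtain ⟨hα0, hα1⟩ := hα
  obtain ⟨hH0, hH1⟩ := hH
  set c : ℝ := -(β ^ 2) / 2 ^ α with hc
  set z : ℝ := c * t ^ (2 * H * α) with hz
  have htp : (0:ℝ) < t ^ (2 * H * α) := Real.rpow_pos_of_pos ht _
  -- rewrite terms
  have hterm : ∀ k : ℕ, c ^ k * t ^ (2 * H * α * k) = z ^ k := by
    intro k
    rw [hz, mul_pow]
    congr 1
    rw [← Real.rpow_natCast (t ^ (2 * H * α)) k, ← Real.rpow_mul ht.le]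
  have hL : (∑' k : ℕ, c ^ k * t ^ (2 * H * α * k) / Real.Gamma (α * k + 1 - α)) =
      ∑' k : ℕ, z ^ k / Real.Gamma (α * k + 1 - α) := by
    congr 1; funext k; rw [hterm k]
  have hR : (∑' k : ℕ, c ^ k * t ^ (2 * H * α * k) / Real.Gamma (α * k + 1)) =
      ∑' k : ℕ, z ^ k / Real.Gamma (α * k + 1) := by
    congr 1; funext k; rw [hterm k]
  rw [hL, hR]
  have hg : Summable (fun k : ℕ => z ^ k / Real.Gamma (α * k + 1)) :=
    summable_ml α 1 z hα0 hα1 one_pos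
  have hf : Summable (fun k : ℕ => z ^ k / Real.Gamma (α * k + 1 - α)) := by
    rw [← summable_nat_add_iff 1]
    have : (fun k : ℕ => z ^ (k + 1) / Real.Gamma (α * (↑(k + 1) : ℝ) + 1 - α)) =
        fun k : ℕ => z * (z ^ k / Real.Gamma (α * k + 1)) := by
      funext k
      have : α * (↑(k + 1) : ℝ) + 1 - α = α * k + 1 := by push_cast; ring
      rw [this, pow_succ]
      ring
    rw [this]
    exact hg.mul_left z
  rw [Summable.tsum_eq_zero_add hf]
  have h0 : z ^ 0 / Real.Gamma (α * (0:ℕ) + 1 - α) = 1 / Real.Gamma (1 - α) := by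
    norm_num
  have hshift : (∑' k : ℕ, z ^ (k + 1) / Real.Gamma (α * (↑(k + 1) : ℝ) + 1 - α)) =
      z * ∑' k : ℕ, z ^ k / Real.Gamma (α * k + 1) := by
    rw [← tsum_mul_left]
    congr 1; funext k
    have : α * (↑(k + 1) : ℝ) + 1 - α = α * k + 1 := by push_cast; ring
    rw [this, pow_succ]
    ring
  rw [h0, hshift]
  -- scalar identities
  have h2H : (2 * H) ^ α = 2 ^ α * H ^ α := Real.mul_rpow (by norm_num) hH0.le
  have htt : t ^ (-(2 * H * α)) * t ^ (2 * H * α) = 1 := by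
    rw [← Real.rpow_add ht]; norm_num
  have h2α : (0:ℝ) < 2 ^ α := Real.rpow_pos_of_pos (by norm_num) _
  have hAz : (2 * H) ^ α * t ^ (-(2 * H * α)) * z = -(H ^ α) * β ^ 2 := by
    rw [hz, hc, h2H]
    field_simp
    linear_combination (-(β ^ 2)) * htt
  set S : ℝ := ∑' k : ℕ, z ^ k / Real.Gamma (α * k + 1) with hS
  calc (2 * H) ^ α * t ^ (-(2 * H * α)) * (1 / Real.Gamma (1 - α) + z * S)
      = ((2 * H) ^ α * t ^ (-(2 * H * α)) * z) * S
        + (2 * H) ^ α * t ^ (-(2 * H * α)) / Real.Gamma (1 - α) := by ring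
    _ = -(H ^ α) * β ^ 2 * S + (2 * H) ^ α * t ^ (-(2 * H * α)) / Real.Gamma (1 - α) := by
        rw [hAz]
end

section
/- Let H ∈ (0,1), k ∈ ℕ with k > 2, and define for x, t > 0 the function u(x,t) = (1/(2^{1-1/k} t^{2H/k})) Σ_{n=0}^∞ (-1)^n 2^{n/k} x^n / (n! Γ(-n/k + 1 - 1/k) t^{2Hn/k}). Then u satisfies the higher-order heat equation with time-dependent coefficient: t^{1-2H} ∂u/∂t = (-1)^k H ∂^k u/∂x^k for all x > 0, t > 0. -/
open Real

namespace Stmt15Aux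

open Filter FormalMultilinearSeries

/-- The sum of the power series with coefficients `c`. -/
noncomputable def S (c : ℕ → ℝ) : ℝ → ℝ := fun y => ∑' n, c n * y ^ n

/-- Coefficient shift corresponding to differentiation. -/
noncomputable def sh (c : ℕ → ℝ) : ℕ → ℝ := fun n => (n + 1) * c (n + 1)

/-- Coefficients give an entire function. -/
def Good (c : ℕ → ℝ) : Prop := ∀ r : ℝ, 0 ≤ r → Summable fun n => |c n| * r ^ n

lemma Good.summable {c : ℕ → ℝ} (hc : Good c) (y : ℝ) :
    Summable fun n => c n * y ^ n := by
  apply Summable.of_abs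
  simpa [abs_mul, abs_pow] using hc |y| (abs_nonneg y)

lemma good_sh {c : ℕ → ℝ} (hc : Good c) : Good (sh c) := by
  intro r hr
  have h2 : Summable fun n => |c (n + 1)| * (2 * max r 1) ^ (n + 1) := by
    have := hc (2 * max r 1) (by positivity)
    exact ((summable_nat_add_iff (f := fun n => |c n| * (2 * max r 1) ^ n) 1).2 this)
  refine Summable.of_nonneg_of_le (fun n => by positivity) (fun n => ?_) h2
  have h1 : (1 : ℝ) ≤ max r 1 := le_max_right _ _
  have hrm : r ≤ max r 1 := le_max_left _ _
  have hn2 : (n + 1 : ℝ) ≤ 2 ^ (n + 1) := by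
    exact_mod_cast (Nat.lt_two_pow_self (n := n + 1)).le
  calc |Stmt15Aux.sh c n| * r ^ n
      = (n + 1) * |c (n + 1)| * r ^ n := by
        simp [Stmt15Aux.sh, abs_mul, abs_of_nonneg (by positivity : (0:ℝ) ≤ (n:ℝ) + 1)]
    _ ≤ 2 ^ (n + 1) * |c (n + 1)| * (max r 1) ^ (n + 1) := by
        have hr' : r ^ n ≤ (max r 1) ^ (n + 1) :=
          le_trans (pow_le_pow_left₀ hr hrm n) (pow_le_pow_right₀ h1 (Nat.le_succ n))
        apply mul_le_mul (mul_le_mul_of_nonneg_right hn2 (abs_nonneg _)) hr'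
          (by positivity) (by positivity)
    _ = |c (n + 1)| * (2 * max r 1) ^ (n + 1) := by ring

lemma radius_top {c : ℕ → ℝ} (hc : Good c) : (ofScalars ℝ c).radius = ⊤ := by
  apply FormalMultilinearSeries.radius_eq_top_of_summable_norm
  intro r
  simp only [FormalMultilinearSeries.ofScalars_norm, Real.norm_eq_abs]
  exact hc r r.coe_nonneg

lemma hasFPSB {c : ℕ → ℝ} (hc : Good c) :
    HasFPowerSeriesOnBall (S c) (ofScalars ℝ c) 0 ⊤ := by
  refine ⟨le_of_eq (radius_top hc).symm, ENNReal.zero_lt_top, fun {y} _ => ?_⟩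
  have : (fun n => FormalMultilinearSeries.ofScalars ℝ c n fun _ => y) = fun n => c n * y ^ n := by
    funext n
    rw [FormalMultilinearSeries.ofScalars_apply_eq, smul_eq_mul]
  rw [this, zero_add]
  exact (hc.summable y).hasSum

lemma contDiff_S {c : ℕ → ℝ} (hc : Good c) : ContDiff ℝ ⊤ (S c) := by
  apply AnalyticOnNhd.contDiff
  have := (hasFPSB hc).analyticOnNhd
  rwa [Metric.emetric_ball_top] at this

lemma deriv_S {c : ℕ → ℝ} (hc : Good c) : deriv (S c) = S (sh c) := by
  have hcont1 : Continuous (deriv (S c)) := (contDiff_S hc).continuous_deriv le_top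
  have hcont2 : Continuous (S (sh c)) := (contDiff_S (good_sh hc)).continuous
  apply Continuous.ext_on (dense_compl_singleton (0:ℝ)) hcont1 hcont2
  intro y hy
  have hy : y ≠ 0 := hy
  set p := ofScalars ℝ c with hp
  have h := (hasFPSB hc).fderiv
  have hmem : y ∈ Metric.eball (0:ℝ) ⊤ := by simp [Metric.emetric_ball_top]
  have hsum := h.hasSum hmem
  rw [zero_add] at hsum
  have happ := (ContinuousLinearMap.apply ℝ ℝ y).hasSum hsum
  have hterm : ∀ n, (p.derivSeries n fun _ => y) y = sh c n * y ^ n * y := by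
    intro n
    rw [FormalMultilinearSeries.derivSeries_apply_diag]
    rw [FormalMultilinearSeries.ofScalars_apply_eq]
    push_cast [nsmul_eq_mul, smul_eq_mul]
    rw [pow_succ]
    simp only [sh]
    ring
  simp only [ContinuousLinearMap.apply_apply, ← hp, hterm] at happ
  have h2 : HasSum (fun n => sh c n * y ^ n * y) (S (sh c) y * y) :=
    ((good_sh hc).summable y).hasSum.mul_right y
  have hEq : fderiv ℝ (S c) y y = S (sh c) y * y := happ.unique h2
  have hy1 : fderiv ℝ (S c) y y = y * deriv (S c) y := by
    calc fderiv ℝ (S c) y y = fderiv ℝ (S c) y (y • (1:ℝ)) := by rw [smul_eq_mul, mul_one]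
      _ = y • (fderiv ℝ (S c) y (1:ℝ)) := by rw [map_smul]
      _ = y * deriv (S c) y := by rw [smul_eq_mul, fderiv_apply_one_eq_deriv]
  have := hy1.symm.trans hEq
  rw [mul_comm (S (sh c) y) y] at this
  exact mul_left_cancel₀ hy this

lemma hasDerivAt_S {c : ℕ → ℝ} (hc : Good c) (y : ℝ) :
    HasDerivAt (S c) (S (sh c) y) y := by
  have hd : DifferentiableAt ℝ (S c) y :=
    ((contDiff_S hc).differentiable (by simp)).differentiableAt
  have := hd.hasDerivAt
  rwa [deriv_S hc] at this

lemma iteratedDeriv_S {c : ℕ → ℝ} (hc : Good c) (m : ℕ) :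
    iteratedDeriv m (S c) = S (sh^[m] c) := by
  induction m generalizing c with
  | zero => simp [iteratedDeriv_zero]
  | succ m ih =>
    rw [iteratedDeriv_succ', deriv_S hc, ih (good_sh hc), ← Function.iterate_succ_apply]


lemma good_iter {c : ℕ → ℝ} (hc : Good c) (m : ℕ) : Good (sh^[m] c) := by
  induction m generalizing c with
  | zero => simpa
  | succ m ih => rw [Function.iterate_succ_apply]; exact ih (good_sh hc)

lemma sh_iter (m : ℕ) : ∀ (c : ℕ → ℝ) (n : ℕ),
    (sh^[m] c) n = (((n + m).factorial : ℝ) / n.factorial) * c (n + m) := by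
  induction m with
  | zero =>
    intro c n
    simp only [Function.iterate_zero, id_eq, Nat.add_zero]
    rw [div_self (Nat.cast_ne_zero.2 (Nat.factorial_ne_zero n)), one_mul]
  | succ m ih =>
    intro c n
    rw [Function.iterate_succ_apply, ih]
    simp only [sh]
    have he : n + (m + 1) = (n + m) + 1 := by omega
    rw [he]
    have hf : (((n + m + 1).factorial : ℝ)) = ((n + m : ℕ) + 1) * (n + m).factorial := by
      rw [Nat.factorial_succ]; push_cast; ring
    rw [hf]
    have h1 : ((n.factorial : ℝ)) ≠ 0 := Nat.cast_ne_zero.2 (Nat.factorial_ne_zero n)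
    field_simp

/-- The coefficients of the Wright-type function. -/
noncomputable def co (k : ℕ) : ℕ → ℝ := fun n =>
  (-1 : ℝ) ^ n * 2 ^ ((n : ℝ) / k) /
    ((n.factorial : ℝ) * Real.Gamma (-(n : ℝ) / k + 1 - 1 / k))

lemma co_rec {k : ℕ} (hk : 0 < k) (n : ℕ) :
    (-1 : ℝ) ^ k * (((n + k).factorial : ℝ) / n.factorial) * co k (n + k) =
      -(2 / k) * (n + 1) * co k n := by
  have hK : (0 : ℝ) < (k : ℝ) := by exact_mod_cast hk
  set z : ℝ := -(n : ℝ) / k + 1 - 1 / k with hzdef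
  have hz1 : z - 1 = -((n : ℝ) + 1) / k := by
    rw [hzdef]; field_simp; ring
  have hz1ne : z - 1 ≠ 0 := by
    rw [hz1]
    have : (0:ℝ) < ((n:ℝ)+1) / k := by positivity
    intro h
    rw [neg_div] at h
    linarith
  have harg : -(((n + k : ℕ) : ℝ)) / k + 1 - 1 / k = z - 1 := by
    push_cast
    rw [hzdef]
    field_simp
    ring
  have hG : Real.Gamma z = (z - 1) * Real.Gamma (z - 1) := by
    have := Real.Gamma_add_one hz1ne
    rw [sub_add_cancel] at this
    rw [this]
  have h2exp : (2 : ℝ) ^ ((((n + k) : ℕ) : ℝ) / k) = 2 * 2 ^ ((n : ℝ) / k) := by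
    push_cast
    rw [add_div, div_self (ne_of_gt hK), Real.rpow_add (by norm_num : (0:ℝ) < 2),
      Real.rpow_one, mul_comm]
  simp only [co, harg, h2exp]
  by_cases hG1 : Real.Gamma (z - 1) = 0
  · rw [hG1, hG, hG1, mul_zero]
    simp
  · have hG0 : Real.Gamma z ≠ 0 := by rw [hG]; exact mul_ne_zero hz1ne hG1
    have hf1 : ((n.factorial : ℝ)) ≠ 0 := Nat.cast_ne_zero.2 (Nat.factorial_ne_zero n)
    have hf2 : (((n + k).factorial : ℝ)) ≠ 0 := Nat.cast_ne_zero.2 (Nat.factorial_ne_zero _)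
    rw [hG]
    rw [pow_add]
    field_simp
    rw [hz1]
    field_simp
    ring_nf
    rw [mul_comm k 2, pow_mul, neg_one_sq, one_pow]

lemma good_of_rec {c : ℕ → ℝ} {k : ℕ} (hk : 0 < k)
    (h : ∀ r : ℝ, 0 ≤ r → ∃ N : ℕ, ∀ n, N ≤ n →
      |c (n + k)| * r ^ (n + k) ≤ (1/2) * (|c n| * r ^ n)) :
    Good c := by
  intro r hr
  obtain ⟨N, hN⟩ := h r hr
  set a : ℕ → ℝ := fun n => |c n| * r ^ n with ha
  have hann : ∀ n, 0 ≤ a n := fun n => by positivity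
  set S0 : ℝ := ∑ j ∈ Finset.range (N + k), a j with hS0
  have hS0nn : 0 ≤ S0 := Finset.sum_nonneg fun j _ => hann j
  have key : ∀ n, a n ≤ S0 * (1/2 : ℝ) ^ ((n - N) / k) := by
    intro n
    induction n using Nat.strong_induction_on with
    | _ n ih =>
      by_cases hn : n < N + k
      · have h1 : (n - N) / k = 0 := Nat.div_eq_of_lt (by omega)
        rw [h1, pow_zero, mul_one]
        exact Finset.single_le_sum (f := a) (fun i _ => hann i) (Finset.mem_range.2 hn)
      · push_neg at hn
        have h2 := hN (n - k) (by omega)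
        have hnkk : n - k + k = n := by omega
        rw [hnkk] at h2
        have h3 := ih (n - k) (by omega)
        have hdiv : (n - N) / k = ((n - k) - N) / k + 1 := by
          have he : n - N = ((n - k) - N) + k := by omega
          rw [he, Nat.add_div_right _ hk]
        calc a n ≤ (1/2) * a (n - k) := h2
          _ ≤ (1/2) * (S0 * (1/2 : ℝ) ^ (((n - k) - N) / k)) :=
            mul_le_mul_of_nonneg_left h3 (by norm_num)
          _ = S0 * (1/2 : ℝ) ^ ((n - N) / k) := by rw [hdiv, pow_succ]; ring
  set q : ℝ := (1/2 : ℝ) ^ ((1 : ℝ) / k) with hq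
  have hq0 : 0 ≤ q := Real.rpow_nonneg (by norm_num) _
  have hq1 : q < 1 := Real.rpow_lt_one (by norm_num) (by norm_num)
    (by positivity)
  set C : ℝ := (1/2 : ℝ) ^ (-(((N : ℝ) + k) / k)) with hC
  have hCpos : 0 < C := Real.rpow_pos_of_pos (by norm_num) _
  have hqn : ∀ n : ℕ, q ^ n = (1/2 : ℝ) ^ ((n : ℝ) / k) := by
    intro n
    rw [hq, ← Real.rpow_natCast ((1/2:ℝ) ^ ((1:ℝ)/(k:ℝ))) n,
      ← Real.rpow_mul (by norm_num : (0:ℝ) ≤ 1/2)]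
    congr 1
    ring
  have hbound : ∀ n, a n ≤ S0 * C * q ^ n := by
    intro n
    have hnatfact : n ≤ N + k + k * ((n - N) / k) := by
      have hdm := Nat.div_add_mod (n - N) k
      have hml : (n - N) % k < k := Nat.mod_lt _ hk
      generalize hQ : k * ((n - N) / k) = Q at *
      omega
    have hm : ((n : ℝ) - ((N : ℝ) + k)) / k ≤ (((n - N) / k : ℕ) : ℝ) := by
      rw [div_le_iff₀ (by positivity : (0:ℝ) < (k:ℝ))]
      have h6 : (n : ℝ) ≤ (N : ℝ) + k + k * (((n - N) / k : ℕ) : ℝ) := by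
        exact_mod_cast Nat.cast_le.2 hnatfact
      linarith
    have hsplit : (1/2 : ℝ) ^ (((n : ℝ) - ((N : ℝ) + k)) / k) = C * q ^ n := by
      rw [hqn n, hC, ← Real.rpow_add (by norm_num : (0:ℝ) < 1/2)]
      congr 1
      field_simp
      ring
    calc a n ≤ S0 * (1/2 : ℝ) ^ ((n - N) / k) := key n
      _ ≤ S0 * (C * q ^ n) := by
          apply mul_le_mul_of_nonneg_left _ hS0nn
          rw [← hsplit]
          calc (1/2 : ℝ) ^ ((n - N) / k)
              = (1/2 : ℝ) ^ (((((n - N) / k) : ℕ)) : ℝ) := (Real.rpow_natCast _ _).symm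
            _ ≤ _ := Real.rpow_le_rpow_of_exponent_ge (by norm_num) (by norm_num) hm
      _ = S0 * C * q ^ n := by ring
  apply Summable.of_nonneg_of_le hann hbound
  exact (summable_geometric_of_lt_one hq0 hq1).mul_left _

lemma good_co {k : ℕ} (hk : 2 < k) : Good (co k) := by
  apply good_of_rec (k := k) (by omega : 0 < k)
  intro r hr
  refine ⟨⌈2 * r ^ k⌉₊, fun n hn => ?_⟩
  have hK : (0:ℝ) < (k:ℝ) := by exact_mod_cast (by omega : 0 < k)
  have hEpos : (0:ℝ) < (n.factorial : ℝ) := by exact_mod_cast Nat.factorial_pos n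
  have hFpos : (0:ℝ) < ((n + k).factorial : ℝ) := by exact_mod_cast Nat.factorial_pos (n + k)
  have he := co_rec (by omega : 0 < k) n
  have habs := congrArg abs he
  simp only [abs_mul, abs_pow, abs_neg, abs_one, one_pow, abs_div, Nat.abs_cast, one_mul,
    abs_two] at habs
  rw [abs_of_nonneg (by positivity : (0:ℝ) ≤ (n:ℝ)+1)] at habs
  -- habs : F / E * |co k (n + k)| = 2 / k * ((n:ℝ) + 1) * |co k n|
  set E : ℝ := (n.factorial : ℝ)
  set F : ℝ := ((n + k).factorial : ℝ)
  have heq : |co k (n + k)| = 2 / (k:ℝ) * (((n:ℝ) + 1) * (E / F)) * |co k n| := by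
    have h3 := congrArg (fun x => E / F * x) habs
    simp only [← mul_assoc] at h3
    rw [show E / F * (F / E) = 1 by field_simp, one_mul] at h3
    rw [h3]; ring
  have hfac : ((n:ℝ) + 2) * (((n:ℝ) + 1) * E) ≤ F := by
    have h1 : (n + 2).factorial ≤ (n + k).factorial := Nat.factorial_le (by omega)
    have h2 : ((n + 2).factorial : ℝ) = ((n:ℝ) + 2) * (((n:ℝ) + 1) * E) := by
      show (((n + 1) + 1).factorial : ℝ) = _
      rw [Nat.factorial_succ, Nat.factorial_succ]
      push_cast
      ring
    rw [← h2]
    show ((n + 2).factorial : ℝ) ≤ ((n + k).factorial : ℝ)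
    exact_mod_cast h1
  have hP : (0:ℝ) ≤ |co k n| * r ^ n := by positivity
  have b1 : (2:ℝ)/(k:ℝ) ≤ 1 := by
    rw [div_le_one hK]; exact_mod_cast (by omega : 2 ≤ k)
  have hn2pos : (0:ℝ) < (n:ℝ) + 2 := by positivity
  have b2 : ((n:ℝ)+1) * (E/F) ≤ 1/((n:ℝ)+2) := by
    rw [show ((n:ℝ)+1) * (E/F) = (((n:ℝ)+1) * E)/F by ring,
      div_le_div_iff₀ hFpos hn2pos]
    nlinarith [hfac]
  have b3 : 2 * r ^ k ≤ (n:ℝ) + 2 := by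
    have h1 := Nat.le_ceil (2 * r ^ k)
    have h2 : ((⌈2 * r ^ k⌉₊ : ℕ):ℝ) ≤ (n:ℝ) := by exact_mod_cast hn
    linarith
  have b3' : r ^ k ≤ ((n:ℝ)+2)/2 := by linarith
  have t1 : (((n:ℝ)+1) * (E/F)) * r ^ k ≤ (1/((n:ℝ)+2)) * (((n:ℝ)+2)/2) :=
    mul_le_mul b2 b3' (by positivity) (by positivity)
  have t1' : (1/((n:ℝ)+2)) * (((n:ℝ)+2)/2) = 1/2 := by
    field_simp
  have t2 : (2/(k:ℝ)) * ((((n:ℝ)+1) * (E/F)) * r ^ k) ≤ 1 * (1/2) :=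
    mul_le_mul b1 (t1.trans_eq t1') (by positivity) (by norm_num)
  calc |co k (n+k)| * r ^ (n+k)
      = (2/(k:ℝ)) * ((((n:ℝ)+1) * (E/F)) * r ^ k) * (|co k n| * r ^ n) := by
        rw [heq, pow_add]; ring
    _ ≤ 1 * (1/2) * (|co k n| * r ^ n) := mul_le_mul_of_nonneg_right t2 hP
    _ = 1/2 * (|co k n| * r ^ n) := by ring

lemma iteratedDeriv_cmul (m : ℕ) (C : ℝ) (f : ℝ → ℝ) :
    iteratedDeriv m (fun z => C * f z) = fun z => C * iteratedDeriv m f z := by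
  induction m generalizing f with
  | zero => simp
  | succ m ih =>
    rw [iteratedDeriv_succ', deriv_const_mul_field' (v := f) C, ih, iteratedDeriv_succ']

lemma series_identity {k : ℕ} (hk : 2 < k) (H y : ℝ) :
    -(2 * H / k) * (S (co k) y + y * S (sh (co k)) y) =
      (-1 : ℝ) ^ k * H * S (sh^[k] (co k)) y := by
  have hc := good_co hk
  set c := co k with hcdef
  have h1 : HasSum (fun n => c n * y ^ n) (S c y) := (hc.summable y).hasSum
  have h2 : HasSum (fun n => y * (sh c n * y ^ n)) (y * S (sh c) y) :=
    ((good_sh hc).summable y).hasSum.mul_left y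
  have hfun : (fun n => y * (sh c n * y ^ n)) =
      fun n => (fun (m : ℕ) => (m : ℝ) * c m * y ^ m) (n + 1) := by
    funext n
    simp only [sh]
    push_cast
    rw [pow_succ]
    ring
  rw [hfun] at h2
  have h2' : HasSum (fun (n : ℕ) => (n : ℝ) * c n * y ^ n) (y * S (sh c) y) := by
    have h := (hasSum_nat_add_iff (f := fun (m : ℕ) => (m : ℝ) * c m * y ^ m) 1).1 h2
    simpa using h
  have h3 := h1.add h2'
  have h4 := h3.mul_left (-(2 * H / (k:ℝ)))
  have h5 : HasSum (fun n => (sh^[k] c) n * y ^ n) (S (sh^[k] c) y) :=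
    ((good_iter hc k).summable y).hasSum
  have h6 := h5.mul_left ((-1 : ℝ) ^ k * H)
  have hfe : (fun n => (-1 : ℝ) ^ k * H * ((sh^[k] c) n * y ^ n)) =
      fun (n : ℕ) => -(2 * H / (k:ℝ)) * (c n * y ^ n + (n : ℝ) * c n * y ^ n) := by
    funext n
    rw [sh_iter]
    have hr := co_rec (by omega : 0 < k) n
    rw [← hcdef] at hr
    linear_combination (H * y ^ n) * hr
  rw [hfe] at h6
  exact h4.unique h6

end Stmt15Aux

open Stmt15Aux in
theorem stmt15 (H : ℝ) (hH : H ∈ Set.Ioo (0:ℝ) 1) (k : ℕ) (hk : 2 < k)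
    (u : ℝ → ℝ → ℝ)
    (hu : ∀ x t : ℝ, 0 < x → 0 < t →
      u x t = (1 / (2 ^ (1 - 1 / (k:ℝ)) * t ^ (2 * H / k))) *
        ∑' n : ℕ, (-1 : ℝ) ^ n * 2 ^ ((n : ℝ) / k) * x ^ n /
          ((n.factorial : ℝ) * Real.Gamma (-(n : ℝ) / k + 1 - 1 / k) * t ^ (2 * H * n / k))) :
    ∀ x t : ℝ, 0 < x → 0 < t →
      t ^ (1 - 2 * H) * deriv (fun τ => u x τ) t =
        (-1 : ℝ) ^ k * H * iteratedDeriv k (fun y => u y t) x := by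
  intro x t hx ht
  obtain ⟨hH0, hH1⟩ := hH
  have hk0 : 0 < k := by omega
  have hK : (0:ℝ) < (k:ℝ) := by exact_mod_cast hk0
  have hc : Good (co k) := good_co hk
  set a : ℝ := 2 * H / (k:ℝ) with ha
  have hapos : 0 < a := by positivity
  set B : ℝ := ((2:ℝ) ^ (1 - 1/(k:ℝ)))⁻¹ with hB
  have hBpos : 0 < B := by
    rw [hB]
    exact inv_pos.2 (Real.rpow_pos_of_pos (by norm_num) _)
  have hrep : ∀ z τ : ℝ, 0 < z → 0 < τ →
      u z τ = B * τ ^ (-a) * S (co k) (z * τ ^ (-a)) := by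
    intro z τ hz hτ
    rw [hu z τ hz hτ]
    have hterm : ∀ n : ℕ, (-1:ℝ)^n * 2 ^ ((n:ℝ)/(k:ℝ)) * z^n /
        ((n.factorial : ℝ) * Real.Gamma (-(n:ℝ)/(k:ℝ) + 1 - 1/(k:ℝ)) * τ ^ (2*H*(n:ℝ)/(k:ℝ)))
        = co k n * (z * τ ^ (-a)) ^ n := by
      intro n
      simp only [co]
      rw [mul_pow]
      have hpow : (τ ^ (-a)) ^ n = (τ ^ (2*H*(n:ℝ)/(k:ℝ)))⁻¹ := by
        rw [← Real.rpow_natCast (τ ^ (-a)) n, ← Real.rpow_mul hτ.le,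
          ← Real.rpow_neg hτ.le]
        congr 1
        rw [ha]; ring
      rw [hpow, div_eq_mul_inv, div_eq_mul_inv, mul_inv]
      ring
    rw [tsum_congr hterm]
    have hpre : (1:ℝ) / (2 ^ (1 - 1/(k:ℝ)) * τ ^ (2*H/(k:ℝ))) = B * τ ^ (-a) := by
      rw [one_div, mul_inv, hB, ← Real.rpow_neg hτ.le, ha]
    rw [hpre]
    rfl
  -- time derivative
  have hev : (fun τ => u x τ) =ᶠ[nhds t] (fun τ => B * τ ^ (-a) * S (co k) (x * τ ^ (-a))) := by
    filter_upwards [Ioi_mem_nhds ht] with τ hτ using hrep x τ hx hτ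
  rw [hev.deriv_eq]
  have h₁ : HasDerivAt (fun τ : ℝ => τ ^ (-a)) (-a * t ^ (-a - 1)) t :=
    Real.hasDerivAt_rpow_const (Or.inl ht.ne')
  have hS : HasDerivAt (S (co k)) (S (sh (co k)) (x * t ^ (-a))) (x * t ^ (-a)) :=
    hasDerivAt_S hc _
  have hcomp : HasDerivAt (fun τ : ℝ => S (co k) (x * τ ^ (-a)))
      (S (sh (co k)) (x * t ^ (-a)) * (x * (-a * t ^ (-a - 1)))) t :=
    by have := hS.comp t (h₁.const_mul x); exact this
  have hprod := (h₁.const_mul B).mul hcomp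
  rw [show (fun τ => B * τ ^ (-a) * S (co k) (x * τ ^ (-a))) = ((fun y => B * y ^ (-a)) * fun τ => S (co k) (x * τ ^ (-a))) from rfl, hprod.deriv]
  -- space derivative
  have hev2 : (fun z => u z t) =ᶠ[nhds x]
      (fun z => (B * t ^ (-a)) * S (co k) (t ^ (-a) * z)) := by
    filter_upwards [Ioi_mem_nhds hx] with z hz
    rw [hrep z t hz ht, mul_comm z (t ^ (-a))]
  rw [hev2.iteratedDeriv_eq k]
  rw [iteratedDeriv_cmul, iteratedDeriv_comp_const_mul ((contDiff_S hc).of_le le_top) (t ^ (-a)),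
    iteratedDeriv_S hc k]
  beta_reduce
  rw [mul_comm (t ^ (-a)) x]
  -- algebra
  have sid := series_identity hk H (x * t ^ (-a))
  have e1 : t ^ (1 - 2*H) * t ^ (-a - 1) = t ^ (-2*H - a) := by
    rw [← Real.rpow_add ht]; congr 1; ring
  have eR : (t ^ (-a)) ^ k = t ^ (-2*H) := by
    rw [← Real.rpow_natCast (t ^ (-a)) k, ← Real.rpow_mul ht.le]
    congr 1
    rw [ha]
    field_simp
  have e3 : t ^ (-a) * t ^ (-2*H) = t ^ (-2*H - a) := by
    rw [← Real.rpow_add ht]; congr 1; ring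
  linear_combination (B * (-a) * (S (co k) (x * t ^ (-a)) +
      x * t ^ (-a) * S (sh (co k)) (x * t ^ (-a)))) * e1 +
    (-(-1:ℝ)^k * H * B * t ^ (-a) * S (sh^[k] (co k)) (x * t ^ (-a))) * eR +
    (-(-1:ℝ)^k * H * B * S (sh^[k] (co k)) (x * t ^ (-a))) * e3 +
    (B * t ^ (-2*H - a)) * sid
end

section
/- For β ∈ ℝ and t > 0, with f(w) = e^{-w} w^{-3/4} for w > 0: the Kilbas–Saigo function E_{3/4, 1/3, -2/3}(-(1/4)β² t^{1/4}) = 1 + Σ_{k=1}^∞ (-β² t^{1/4}/4)^k ∏_{j=0}^{k-1} Γ(j/4+1/2)/Γ(j/4+5/4) admits the integral representation (Γ(3/4)/(π√2)) ∫_0^∞ e^{-w} w^{-3/4} exp(-β² (tw)^{1/4}) dw. -/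
open Real Finset Nat

lemma exp_tsum' (y : ℝ) : ∑' n : ℕ, y ^ n / (n ! : ℝ) = Real.exp y := by
  rw [Real.exp_eq_exp_ℝ, NormedSpace.exp_eq_tsum_div]

lemma prod_formula (k : ℕ) :
    (∏ j ∈ Finset.range k,
        Real.Gamma ((j:ℝ) / 4 + 1 / 2) / Real.Gamma ((j:ℝ) / 4 + 5 / 4)) =
      Real.Gamma (((k:ℝ) + 1) / 4) * Real.Gamma (3 / 4) * 4 ^ k /
        (π * Real.sqrt 2 * (k ! : ℝ)) := by
  induction k with
  | zero =>
      have h := Real.Gamma_mul_Gamma_one_sub (1/4)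
      have h2 : (1:ℝ) - 1/4 = 3/4 := by norm_num
      have h3 : Real.sin (π * (1/4)) = Real.sqrt 2 / 2 := by
        rw [mul_one_div, Real.sin_pi_div_four]
      rw [h2, h3] at h
      simp only [Finset.range_zero, Finset.prod_empty, Nat.cast_zero, Nat.factorial_zero,
        Nat.cast_one, pow_zero, zero_add]
      rw [h]
      have hs : Real.sqrt 2 ≠ 0 := by positivity
      field_simp
      nlinarith [Real.mul_self_sqrt (show (0:ℝ) ≤ 2 by norm_num), Real.pi_pos]
  | succ k ih =>
      have hpos : (0:ℝ) < ((k:ℝ) + 1) / 4 := by positivity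
      have hΓ : Real.Gamma ((k:ℝ)/4 + 5/4) = (((k:ℝ)+1)/4) * Real.Gamma (((k:ℝ)+1)/4) := by
        have : (k:ℝ)/4 + 5/4 = ((k:ℝ)+1)/4 + 1 := by ring
        rw [this, Real.Gamma_add_one hpos.ne']
      have harg : (k:ℝ)/4 + 1/2 = ((k:ℝ)+1+1)/4 := by ring
      rw [Finset.prod_range_succ, ih, hΓ, harg]
      have hΓne : Real.Gamma (((k:ℝ)+1)/4) ≠ 0 := (Real.Gamma_pos_of_pos hpos).ne'
      have hπ : π ≠ 0 := Real.pi_ne_zero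
      have hs : Real.sqrt 2 ≠ 0 := by positivity
      have hf : ((k:ℕ)! : ℝ) ≠ 0 := Nat.cast_ne_zero.mpr k.factorial_ne_zero
      push_cast [Nat.factorial_succ]
      field_simp
      ring

theorem stmt18 (β t : ℝ) (ht : 0 < t) :
    (∑' k : ℕ, (-(β ^ 2) * t ^ ((1:ℝ)/4) / 4) ^ k *
        ∏ j ∈ Finset.range k,
          Real.Gamma ((j:ℝ) / 4 + 1 / 2) / Real.Gamma ((j:ℝ) / 4 + 5 / 4)) =
      (Real.Gamma (3 / 4) / (π * Real.sqrt 2)) *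
        ∫ w in Set.Ioi (0:ℝ),
          Real.exp (-w) * w ^ (-(3:ℝ)/4) * Real.exp (-(β ^ 2) * (t * w) ^ ((1:ℝ)/4)) := by
  set x : ℝ := β ^ 2 * t ^ ((1:ℝ)/4) with hxdef
  have hx : 0 ≤ x := by positivity
  -- the series expansion terms
  set F : ℕ → ℝ → ℝ := fun k w => ((-x) ^ k / k !) * (Real.exp (-w) * w ^ (((k:ℝ)+1)/4 - 1))
    with hF
  have hmeas : ∀ k : ℕ, MeasureTheory.AEStronglyMeasurable (F k)
      (MeasureTheory.volume.restrict (Set.Ioi (0:ℝ))) := by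
    intro k
    apply Measurable.aestronglyMeasurable
    fun_prop
  -- pointwise power splitting
  have hwpow : ∀ (k : ℕ) {w : ℝ}, 0 < w →
      w ^ (((k:ℝ)+1)/4 - 1) = w ^ (-(3:ℝ)/4) * (w ^ ((1:ℝ)/4)) ^ k := by
    intro k w hw
    rw [← Real.rpow_natCast (w ^ ((1:ℝ)/4)) k, ← Real.rpow_mul hw.le, ← Real.rpow_add hw]
    congr 1
    ring
  -- pointwise sum of absolute values
  have habs : ∀ {w : ℝ}, 0 < w → ∀ k : ℕ,
      ‖F k w‖ = (Real.exp (-w) * w ^ (-(3:ℝ)/4)) * ((x * w ^ ((1:ℝ)/4)) ^ k / k !) := by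
    intro w hw k
    have h1 : 0 ≤ w ^ (((k:ℝ)+1)/4 - 1) := Real.rpow_nonneg hw.le _
    have h2 : ‖F k w‖ = (x ^ k / k !) * (Real.exp (-w) * w ^ (((k:ℝ)+1)/4 - 1)) := by
      rw [hF]
      simp only [Real.norm_eq_abs, abs_mul, abs_div, abs_pow, abs_neg, abs_of_nonneg hx,
        Nat.abs_cast, abs_of_nonneg h1, abs_of_nonneg (Real.exp_pos _).le]
    rw [h2, hwpow k hw, mul_pow]
    ring
  -- pointwise identity for the signed sum
  have hptws : ∀ {w : ℝ}, 0 < w →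
      (∑' k : ℕ, F k w) = Real.exp (-w) * w ^ (-(3:ℝ)/4) * Real.exp (-x * w ^ ((1:ℝ)/4)) := by
    intro w hw
    have : ∀ k : ℕ, F k w
        = (Real.exp (-w) * w ^ (-(3:ℝ)/4)) * ((-x * w ^ ((1:ℝ)/4)) ^ k / k !) := by
      intro k
      rw [hF]
      simp only
      rw [hwpow k hw, mul_pow]
      ring
    rw [tsum_congr this, tsum_mul_left, exp_tsum']
  -- the dominating function
  set G : ℝ → ℝ := fun w => Real.exp ((x ^ 2 + 1) / 2) *
      (w ^ (-(3:ℝ)/4) * Real.exp (-(1/2 : ℝ) * w ^ (1:ℝ))) with hG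
  have hGint : MeasureTheory.IntegrableOn G (Set.Ioi (0:ℝ)) := by
    exact (integrableOn_rpow_mul_exp_neg_mul_rpow (by norm_num) zero_lt_one (by norm_num)).const_mul _
  -- pointwise domination of the sum of norms
  have hdom : ∀ {w : ℝ}, 0 < w →
      (∑' k : ℕ, ‖F k w‖) ≤ G w := by
    intro w hw
    have hsum : (∑' k : ℕ, ‖F k w‖)
        = Real.exp (-w) * w ^ (-(3:ℝ)/4) * Real.exp (x * w ^ ((1:ℝ)/4)) := by
      rw [tsum_congr (habs hw), tsum_mul_left, exp_tsum']
    rw [hsum, hG]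
    have hq : w ^ ((1:ℝ)/4) * w ^ ((1:ℝ)/4) = w ^ ((1:ℝ)/2) := by
      rw [← Real.rpow_add hw]; norm_num
    have hsq : w ^ ((1:ℝ)/2) ≤ 1 + w := by
      rcases le_or_gt w 1 with h | h
      · have := Real.rpow_le_one hw.le h (by norm_num : (0:ℝ) ≤ 1/2)
        linarith
      · have h2 := Real.rpow_le_rpow_of_exponent_le h.le (by norm_num : (1:ℝ)/2 ≤ 1)
        rw [Real.rpow_one] at h2
        linarith
    have key : -w + x * w ^ ((1:ℝ)/4) ≤ (x ^ 2 + 1) / 2 + (-(1/2) * w) := by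
      nlinarith [sq_nonneg (x - w ^ ((1:ℝ)/4))]
    have hwn : 0 ≤ w ^ (-(3:ℝ)/4) := Real.rpow_nonneg hw.le _
    have := Real.exp_le_exp.mpr key
    rw [Real.exp_add, Real.exp_add] at this
    calc Real.exp (-w) * w ^ (-(3:ℝ)/4) * Real.exp (x * w ^ ((1:ℝ)/4))
        = (Real.exp (-w) * Real.exp (x * w ^ ((1:ℝ)/4))) * w ^ (-(3:ℝ)/4) := by ring
      _ ≤ (Real.exp ((x ^ 2 + 1) / 2) * Real.exp (-(1/2) * w)) * w ^ (-(3:ℝ)/4) := by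
          apply mul_le_mul_of_nonneg_right _ hwn
          rw [← Real.exp_add, ← Real.exp_add]
          exact Real.exp_le_exp.mpr key
      _ = Real.exp ((x ^ 2 + 1) / 2) * (w ^ (-(3:ℝ)/4) * Real.exp (-(1/2:ℝ) * w ^ (1:ℝ))) := by
          rw [Real.rpow_one]; ring
  -- summability of the norms at each point
  have hsummable : ∀ {w : ℝ}, 0 < w → Summable (fun k : ℕ => ‖F k w‖) := by
    intro w hw
    apply Summable.congr (f := fun k : ℕ =>
      (Real.exp (-w) * w ^ (-(3:ℝ)/4)) * ((x * w ^ ((1:ℝ)/4)) ^ k / k !))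
    · exact ((Real.summable_pow_div_factorial _).mul_left _)
    · intro k; rw [habs hw k]
  -- the finiteness hypothesis for integral_tsum
  have hfin : (∑' k : ℕ, ∫⁻ w in Set.Ioi (0:ℝ), ‖F k w‖₊) ≠ ⊤ := by
    rw [← MeasureTheory.lintegral_tsum (fun k => (hmeas k).aemeasurable.nnnorm.coe_nnreal_ennreal)]
    have hb : ∫⁻ w in Set.Ioi (0:ℝ), (∑' k : ℕ, (‖F k w‖₊ : ENNReal))
        ≤ ∫⁻ w in Set.Ioi (0:ℝ), (‖G w‖₊ : ENNReal) := by
      apply MeasureTheory.lintegral_mono_ae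
      rw [MeasureTheory.ae_restrict_iff' measurableSet_Ioi]
      filter_upwards with w hw
      have h1 : (∑' k : ℕ, (‖F k w‖₊ : ENNReal)) = ENNReal.ofReal (∑' k : ℕ, ‖F k w‖) := by
        rw [ENNReal.ofReal_tsum_of_nonneg (fun k => norm_nonneg _) (hsummable hw)]
        congr 1
        ext k
        rw [← (show ∀ y : ℝ, ENNReal.ofReal ‖y‖ = (‖y‖₊ : ENNReal) from fun y => ofReal_norm y)]
      rw [h1, ← (show ∀ y : ℝ, ENNReal.ofReal ‖y‖ = (‖y‖₊ : ENNReal) from fun y => ofReal_norm y)]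
      exact ENNReal.ofReal_le_ofReal ((hdom hw).trans (le_abs_self _))
    exact (lt_of_le_of_lt hb hGint.2).ne
  -- interchange sum and integral
  have hinterchange :
      (∫ w in Set.Ioi (0:ℝ), ∑' k : ℕ, F k w) = ∑' k : ℕ, ∫ w in Set.Ioi (0:ℝ), F k w :=
    MeasureTheory.integral_tsum hmeas hfin
  -- each term integrates to a Gamma value
  have hterm : ∀ k : ℕ, (∫ w in Set.Ioi (0:ℝ), F k w)
      = ((-x) ^ k / k !) * Real.Gamma (((k:ℝ)+1)/4) := by
    intro k
    rw [hF]
    simp only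
    rw [MeasureTheory.integral_const_mul]
    congr 1
    exact (Real.Gamma_eq_integral (by positivity : (0:ℝ) < ((k:ℝ)+1)/4)).symm
  -- rewrite the integral in the statement
  have hintegral : (∫ w in Set.Ioi (0:ℝ),
        Real.exp (-w) * w ^ (-(3:ℝ)/4) * Real.exp (-(β ^ 2) * (t * w) ^ ((1:ℝ)/4)))
      = ∑' k : ℕ, ((-x) ^ k / k !) * Real.Gamma (((k:ℝ)+1)/4) := by
    rw [← tsum_congr hterm, ← hinterchange]
    apply MeasureTheory.setIntegral_congr_fun measurableSet_Ioi
    intro w hw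
    have hw' : (0:ℝ) < w := hw
    dsimp only
    rw [hptws hw']
    congr 2
    rw [Real.mul_rpow ht.le hw'.le, hxdef]
    ring
  rw [hintegral]
  rw [← tsum_mul_left]
  apply tsum_congr
  intro k
  rw [prod_formula k]
  have hπ : π ≠ 0 := Real.pi_ne_zero
  have hs : Real.sqrt 2 ≠ 0 := by positivity
  have hf : ((k ! : ℕ) : ℝ) ≠ 0 := Nat.cast_ne_zero.mpr k.factorial_ne_zero
  have hx4 : (-(β ^ 2) * t ^ ((1:ℝ)/4) / 4) ^ k * (4:ℝ) ^ k = (-x) ^ k := by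
    rw [← mul_pow, hxdef]; ring_nf
  field_simp
  have h14 : ((-1/4:ℝ))^k * 4^k = (-1)^k := by rw [← mul_pow]; norm_num
  rw [hxdef]; linear_combination (β ^ (k*2) * (t ^ ((1:ℝ)/4)) ^ k) * h14
end
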